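/- Let G : ℝ → ℝ be continuous, non-increasing, and satisfy |G(s) - G(t)| < |s - t| for all s ≠ t. If G has a fixed point t̄ (G(t̄) = t̄), then for any initial value t₁, the sequence defined by t_{j+1} = G(t_j) converges to t̄. -/

import Mathlib

set_option maxHeartbeats 1000000 in
theorem stmt0 (G : ℝ → ℝ) (hcont : Continuous G) (hanti : Antitone G)
    (hstrict : ∀ s t : ℝ, s ≠ t → |G s - G t| < |s - t|)
    (tbar : ℝ) (hfix : G tbar = tbar)
    (t : ℕ → ℝ) (hrec : ∀ j, t (j + 1) = G (t j)) :
    Filter.Tendsto t Filter.atTop (nhds tbar) := by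
  set d : ℕ → ℝ := fun j => |t j - tbar| with hd
  have hstep : ∀ j, d (j + 1) ≤ d j := by
    intro j
    by_cases h : t j = tbar
    · simp [hd, hrec, h, hfix]
    · have h2 := hstrict (t j) tbar h
      rw [hfix] at h2
      simp only [hd, hrec j]
      exact le_of_lt h2
  have hmono : Antitone d := antitone_nat_of_succ_le hstep
  have hbdd : BddBelow (Set.range d) := by
    refine ⟨0, ?_⟩
    rintro x ⟨j, rfl⟩
    exact abs_nonneg _
  set L : ℝ := ⨅ j, d j with hLdef
  have hL : Filter.Tendsto d Filter.atTop (nhds L) := tendsto_atTop_ciInf hmono hbdd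
  have hmem : ∀ j, t j ∈ Set.Icc (tbar - d 0) (tbar + d 0) := by
    intro j
    have h1 : |t j - tbar| ≤ d 0 := hmono (Nat.zero_le j)
    have h2 := abs_le.mp h1
    constructor <;> linarith [h2.1, h2.2]
  obtain ⟨x, -, φ, hφ, hx⟩ := (isCompact_Icc).tendsto_subseq hmem
  have habs : Filter.Tendsto (d ∘ φ) Filter.atTop (nhds |x - tbar|) := by
    have : Continuous fun y : ℝ => |y - tbar| :=
      continuous_abs.comp (continuous_id.sub continuous_const)
    exact (this.tendsto x).comp hx
  have hL1 : |x - tbar| = L :=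
    tendsto_nhds_unique habs (hL.comp hφ.tendsto_atTop)
  have habs2 : Filter.Tendsto (fun k => d (φ k + 1)) Filter.atTop (nhds |G x - tbar|) := by
    have hc : Continuous fun y : ℝ => |G y - tbar| :=
      continuous_abs.comp (hcont.sub continuous_const)
    have := (hc.tendsto x).comp hx
    simpa [hd, hrec, Function.comp_def] using this
  have hL2 : |G x - tbar| = L :=
    tendsto_nhds_unique habs2
      (hL.comp (Filter.tendsto_atTop_mono (fun k => Nat.le_succ (φ k)) hφ.tendsto_atTop))
  have hL0 : L = 0 := by
    by_contra hne
    have hx' : x ≠ tbar := by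
      intro h; apply hne; rw [← hL1, h, sub_self, abs_zero]
    have := hstrict x tbar hx'
    rw [hfix, hL1, hL2] at this
    exact lt_irrefl _ this
  rw [hL0] at hL
  have : Filter.Tendsto (fun j => dist (t j) tbar) Filter.atTop (nhds 0) := by
    simpa [Real.dist_eq, hd] using hL
  exact tendsto_iff_dist_tendsto_zero.mpr this
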